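/- If all entries of the I×J matrix Π are nonnegative and all entries of the vector ν ∈ ℝ^{I+J} are strictly positive, then the system of I+J quadratic equations β_i² + Σ_{j=1}^J β_i β_{I+j} Π_{ij} = ν_i (for 1 ≤ i ≤ I) and β_{I+j}² + Σ_{i=1}^I β_i β_{I+j} Π_{ij} = ν_{I+j} (for 1 ≤ j ≤ J) has exactly one solution β with all components strictly positive. -/

import Mathlib

open Finset Real

lemma cs_aux1 (u v : ℝ) (hu : 0 < u) (hv : 0 < v) :
    0 ≤ (u - v) * (Real.log u - Real.log v) := by
  rcases le_total u v with h | h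
  · exact mul_nonneg_of_nonpos_of_nonpos (by linarith) (by simp [Real.log_le_log_iff, hu, hv, h])
  · exact mul_nonneg (by linarith) (by simp [Real.log_le_log_iff, hu, hv, h, sub_nonneg])

lemma cs_aux2 (u v : ℝ) (hu : 0 < u) (hv : 0 < v)
    (h : (u - v) * (Real.log u - Real.log v) = 0) : u = v := by
  rcases lt_trichotomy u v with hlt | he | hgt
  · have h1 : Real.log u < Real.log v := Real.log_lt_log hu hlt
    nlinarith
  · exact he
  · have h1 : Real.log v < Real.log u := Real.log_lt_log hv hgt
    nlinarith

lemma cs_unique {I J : ℕ} (P : Fin I → Fin J → ℝ) (hP : ∀ i j, 0 ≤ P i j)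
    (ν1 : Fin I → ℝ) (ν2 : Fin J → ℝ)
    (a a' : Fin I → ℝ) (b b' : Fin J → ℝ)
    (ha : ∀ i, 0 < a i) (ha' : ∀ i, 0 < a' i)
    (hb : ∀ j, 0 < b j) (hb' : ∀ j, 0 < b' j)
    (hEa : ∀ i, a i ^ 2 + ∑ j, a i * b j * P i j = ν1 i)
    (hEa' : ∀ i, a' i ^ 2 + ∑ j, a' i * b' j * P i j = ν1 i)
    (hEb : ∀ j, b j ^ 2 + ∑ i, a i * b j * P i j = ν2 j)
    (hEb' : ∀ j, b' j ^ 2 + ∑ i, a' i * b' j * P i j = ν2 j) :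
    a = a' ∧ b = b' := by
  set T1 : Fin I → ℝ := fun i => (a i ^ 2 - a' i ^ 2) * (Real.log (a i) - Real.log (a' i)) with hT1
  set T2 : Fin J → ℝ := fun j => (b j ^ 2 - b' j ^ 2) * (Real.log (b j) - Real.log (b' j)) with hT2
  set T3 : Fin I → Fin J → ℝ := fun i j =>
    P i j * (a i * b j - a' i * b' j) *
      (Real.log (a i * b j) - Real.log (a' i * b' j)) with hT3
  -- row sums
  have hrow : ∀ i, ∑ j, P i j * (a i * b j - a' i * b' j) = a' i ^ 2 - a i ^ 2 := by
    intro i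
    have e1 := hEa i; have e2 := hEa' i
    have : ∑ j, P i j * (a i * b j - a' i * b' j)
        = (∑ j, a i * b j * P i j) - (∑ j, a' i * b' j * P i j) := by
      rw [← Finset.sum_sub_distrib]; exact Finset.sum_congr rfl fun j _ => by ring
    rw [this]; linarith
  have hcol : ∀ j, ∑ i, P i j * (a i * b j - a' i * b' j) = b' j ^ 2 - b j ^ 2 := by
    intro j
    have e1 := hEb j; have e2 := hEb' j
    have : ∑ i, P i j * (a i * b j - a' i * b' j)
        = (∑ i, a i * b j * P i j) - (∑ i, a' i * b' j * P i j) := by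
      rw [← Finset.sum_sub_distrib]; exact Finset.sum_congr rfl fun i _ => by ring
    rw [this]; linarith
  have hsum : (∑ i, T1 i) + (∑ j, T2 j) + (∑ i, ∑ j, T3 i j) = 0 := by
    have hsplit : ∀ i j, T3 i j =
        P i j * (a i * b j - a' i * b' j) * (Real.log (a i) - Real.log (a' i))
        + P i j * (a i * b j - a' i * b' j) * (Real.log (b j) - Real.log (b' j)) := by
      intro i j
      simp only [hT3]
      rw [Real.log_mul (ha i).ne' (hb j).ne', Real.log_mul (ha' i).ne' (hb' j).ne']
      ring
    have h3 : (∑ i, ∑ j, T3 i j)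
        = (∑ i, (Real.log (a i) - Real.log (a' i)) * (a' i ^ 2 - a i ^ 2))
        + (∑ j, (Real.log (b j) - Real.log (b' j)) * (b' j ^ 2 - b j ^ 2)) := by
      calc (∑ i, ∑ j, T3 i j)
          = (∑ i, ∑ j, P i j * (a i * b j - a' i * b' j) * (Real.log (a i) - Real.log (a' i)))
          + (∑ i, ∑ j, P i j * (a i * b j - a' i * b' j) * (Real.log (b j) - Real.log (b' j))) := by
            rw [← Finset.sum_add_distrib]
            refine Finset.sum_congr rfl fun i _ => ?_
            rw [← Finset.sum_add_distrib]
            exact Finset.sum_congr rfl fun j _ => hsplit i j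
        _ = (∑ i, (Real.log (a i) - Real.log (a' i)) * (a' i ^ 2 - a i ^ 2))
          + (∑ j, (Real.log (b j) - Real.log (b' j)) * (b' j ^ 2 - b j ^ 2)) := by
            congr 1
            · refine Finset.sum_congr rfl fun i _ => ?_
              rw [← hrow i, Finset.mul_sum]
              exact Finset.sum_congr rfl fun j _ => by ring
            · rw [Finset.sum_comm]
              refine Finset.sum_congr rfl fun j _ => ?_
              rw [← hcol j, Finset.mul_sum]
              exact Finset.sum_congr rfl fun i _ => by ring
    rw [h3, hT1, hT2]
    have e1 : ∀ i : Fin I, (a i ^ 2 - a' i ^ 2) * (Real.log (a i) - Real.log (a' i))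
        + (Real.log (a i) - Real.log (a' i)) * (a' i ^ 2 - a i ^ 2) = 0 := fun i => by ring
    have e2 : ∀ j : Fin J, (b j ^ 2 - b' j ^ 2) * (Real.log (b j) - Real.log (b' j))
        + (Real.log (b j) - Real.log (b' j)) * (b' j ^ 2 - b j ^ 2) = 0 := fun j => by ring
    have := Finset.sum_eq_zero (fun i (_ : i ∈ Finset.univ) => e1 i)
    have := Finset.sum_eq_zero (fun j (_ : j ∈ Finset.univ) => e2 j)
    simp only [Finset.sum_add_distrib] at *
    linarith
  have hT1nn : ∀ i, 0 ≤ T1 i := by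
    intro i
    have : T1 i = (a i + a' i) * ((a i - a' i) * (Real.log (a i) - Real.log (a' i))) := by
      rw [hT1]; ring
    rw [this]
    exact mul_nonneg (by linarith [ha i, ha' i]) (cs_aux1 _ _ (ha i) (ha' i))
  have hT2nn : ∀ j, 0 ≤ T2 j := by
    intro j
    have : T2 j = (b j + b' j) * ((b j - b' j) * (Real.log (b j) - Real.log (b' j))) := by
      rw [hT2]; ring
    rw [this]
    exact mul_nonneg (by linarith [hb j, hb' j]) (cs_aux1 _ _ (hb j) (hb' j))
  have hT3nn : ∀ i j, 0 ≤ T3 i j := by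
    intro i j
    have : T3 i j = P i j * ((a i * b j - a' i * b' j) *
        (Real.log (a i * b j) - Real.log (a' i * b' j))) := by rw [hT3]; ring
    rw [this]
    exact mul_nonneg (hP i j)
      (cs_aux1 _ _ (mul_pos (ha i) (hb j)) (mul_pos (ha' i) (hb' j)))
  have hS1 : (0:ℝ) ≤ ∑ i, T1 i := Finset.sum_nonneg fun i _ => hT1nn i
  have hS2 : (0:ℝ) ≤ ∑ j, T2 j := Finset.sum_nonneg fun j _ => hT2nn j
  have hS3 : (0:ℝ) ≤ ∑ i, ∑ j, T3 i j :=
    Finset.sum_nonneg fun i _ => Finset.sum_nonneg fun j _ => hT3nn i j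
  have hZ1 : ∑ i, T1 i = 0 := le_antisymm (by linarith) hS1
  have hZ2 : ∑ j, T2 j = 0 := le_antisymm (by linarith) hS2
  constructor
  · funext i
    have := (Finset.sum_eq_zero_iff_of_nonneg (fun i _ => hT1nn i)).1 hZ1 i (Finset.mem_univ i)
    have hfac : (a i + a' i) * ((a i - a' i) * (Real.log (a i) - Real.log (a' i))) = 0 := by
      rw [← this, hT1]; ring
    have hpos : (0:ℝ) < a i + a' i := by linarith [ha i, ha' i]
    exact cs_aux2 _ _ (ha i) (ha' i) (by
      rcases mul_eq_zero.1 hfac with h | h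
      · exact absurd h hpos.ne'
      · exact h)
  · funext j
    have := (Finset.sum_eq_zero_iff_of_nonneg (fun j _ => hT2nn j)).1 hZ2 j (Finset.mem_univ j)
    have hfac : (b j + b' j) * ((b j - b' j) * (Real.log (b j) - Real.log (b' j))) = 0 := by
      rw [← this, hT2]; ring
    have hpos : (0:ℝ) < b j + b' j := by linarith [hb j, hb' j]
    exact cs_aux2 _ _ (hb j) (hb' j) (by
      rcases mul_eq_zero.1 hfac with h | h
      · exact absurd h hpos.ne'
      · exact h)

lemma cs_scalar_bound (c t : ℝ) (hc : 0 < c) :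
    c * |t| - 2 * c ^ 2 ≤ Real.exp (2 * t) / 2 - c * t := by
  rcases le_or_gt 0 t with h | h
  · rw [abs_of_nonneg h]
    have h1 : t + 1 ≤ Real.exp t := Real.add_one_le_exp t
    have h2 : (t + 1) ^ 2 ≤ Real.exp t ^ 2 := by nlinarith [Real.exp_pos t]
    have h3 : Real.exp t ^ 2 = Real.exp (2 * t) := by
      rw [← Real.exp_nat_mul]; norm_num
    nlinarith [sq_nonneg (t - 2*c)]
  · rw [abs_of_neg h]
    nlinarith [Real.exp_pos (2 * t)]

lemma cs_sum_update {n : ℕ} (g : Fin n → ℝ → ℝ) (f : Fin n → ℝ) (i0 : Fin n) (t : ℝ) :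
    ∑ i, g i (Function.update f i0 t i)
      = g i0 t + ∑ i ∈ Finset.univ.erase i0, g i (f i) := by
  rw [← Finset.add_sum_erase Finset.univ (fun i => g i (Function.update f i0 t i))
    (Finset.mem_univ i0), Function.update_self]
  congr 1
  refine Finset.sum_congr rfl fun i hi => ?_
  rw [Function.update_of_ne (Finset.ne_of_mem_erase hi)]

lemma cs_exists {I J : ℕ} (P : Fin I → Fin J → ℝ) (hP : ∀ i j, 0 ≤ P i j)
    (ν1 : Fin I → ℝ) (ν2 : Fin J → ℝ) (hν1 : ∀ i, 0 < ν1 i) (hν2 : ∀ j, 0 < ν2 j) :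
    ∃ (a : Fin I → ℝ) (b : Fin J → ℝ), (∀ i, 0 < a i) ∧ (∀ j, 0 < b j) ∧
      (∀ i, a i ^ 2 + ∑ j, a i * b j * P i j = ν1 i) ∧
      (∀ j, b j ^ 2 + ∑ i, a i * b j * P i j = ν2 j) := by
  classical
  set F : (Fin I → ℝ) × (Fin J → ℝ) → ℝ := fun p =>
    (∑ i, Real.exp (2 * p.1 i) / 2) + (∑ j, Real.exp (2 * p.2 j) / 2)
    + (∑ i, ∑ j, P i j * Real.exp (p.1 i + p.2 j))
    - (∑ i, ν1 i * p.1 i) - (∑ j, ν2 j * p.2 j) with hF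
  have hFcont : Continuous F := by
    apply Continuous.sub
    apply Continuous.sub
    apply Continuous.add
    apply Continuous.add
    · exact continuous_finset_sum _ fun i _ => by fun_prop
    · exact continuous_finset_sum _ fun j _ => by fun_prop
    · exact continuous_finset_sum _ fun i _ => continuous_finset_sum _ fun j _ => by fun_prop
    · exact continuous_finset_sum _ fun i _ => by fun_prop
    · exact continuous_finset_sum _ fun j _ => by fun_prop
  -- lower bound
  set C : ℝ := (∑ i, 2 * ν1 i ^ 2) + (∑ j, 2 * ν2 j ^ 2) with hC
  have hlow : ∀ p : (Fin I → ℝ) × (Fin J → ℝ),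
      (∑ i, ν1 i * |p.1 i|) + (∑ j, ν2 j * |p.2 j|) - C ≤ F p := by
    intro p
    have h1 : ∀ i : Fin I, ν1 i * |p.1 i| - 2 * ν1 i ^ 2
        ≤ Real.exp (2 * p.1 i) / 2 - ν1 i * p.1 i :=
      fun i => cs_scalar_bound (ν1 i) (p.1 i) (hν1 i)
    have h2 : ∀ j : Fin J, ν2 j * |p.2 j| - 2 * ν2 j ^ 2
        ≤ Real.exp (2 * p.2 j) / 2 - ν2 j * p.2 j :=
      fun j => cs_scalar_bound (ν2 j) (p.2 j) (hν2 j)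
    have hs1 := Finset.sum_le_sum (fun i (_ : i ∈ Finset.univ) => h1 i)
    have hs2 := Finset.sum_le_sum (fun j (_ : j ∈ Finset.univ) => h2 j)
    simp only [Finset.sum_sub_distrib] at hs1 hs2
    have hnn : (0:ℝ) ≤ ∑ i, ∑ j, P i j * Real.exp (p.1 i + p.2 j) :=
      Finset.sum_nonneg fun i _ => Finset.sum_nonneg fun j _ =>
        mul_nonneg (hP i j) (Real.exp_pos _).le
    simp only [hF, hC]
    linarith
  set c : ℝ := |F (0, 0)| + C + 1 with hc
  have hCnn : 0 ≤ C := by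
    rw [hC]
    have : ∀ i : Fin I, (0:ℝ) ≤ 2 * ν1 i ^ 2 := fun i => by positivity
    have : ∀ j : Fin J, (0:ℝ) ≤ 2 * ν2 j ^ 2 := fun j => by positivity
    positivity
  have hcpos : 0 < c := by rw [hc]; positivity
  set lo : (Fin I → ℝ) × (Fin J → ℝ) := (fun i => -(c / ν1 i), fun j => -(c / ν2 j)) with hlo
  set hi : (Fin I → ℝ) × (Fin J → ℝ) := (fun i => c / ν1 i, fun j => c / ν2 j) with hhi
  set K : Set ((Fin I → ℝ) × (Fin J → ℝ)) := Set.Icc lo hi with hK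
  have h0K : (0, 0) ∈ K := by
    refine ⟨⟨fun i => ?_, fun j => ?_⟩, ⟨fun i => ?_, fun j => ?_⟩⟩ <;>
        simp only [hlo, hhi, Pi.zero_apply, neg_nonpos]
    · exact div_nonneg hcpos.le (hν1 i).le
    · exact div_nonneg hcpos.le (hν2 j).le
    · exact div_nonneg hcpos.le (hν1 i).le
    · exact div_nonneg hcpos.le (hν2 j).le
  have hKcpt : IsCompact K := isCompact_Icc
  obtain ⟨p, hpK, hpmin⟩ := hKcpt.exists_isMinOn ⟨(0,0), h0K⟩ hFcont.continuousOn
  -- p is a global minimizer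
  have hglobal : ∀ q, F p ≤ F q := by
    intro q
    by_cases hq : q ∈ K
    · exact hpmin hq
    · -- some coordinate escapes the box
      have hbig : (∃ i, c < ν1 i * |q.1 i|) ∨ (∃ j, c < ν2 j * |q.2 j|) := by
        simp only [hK, Set.mem_Icc, not_and_or, Prod.le_def, Pi.le_def, not_and_or, not_forall,
          not_le, hlo, hhi] at hq
        rcases hq with (⟨i, hi2⟩ | ⟨j, hj2⟩) | (⟨i, hi2⟩ | ⟨j, hj2⟩)
        · refine Or.inl ⟨i, ?_⟩
          have h := hν1 i
          have habs : c / ν1 i < |q.1 i| :=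
            lt_of_lt_of_le (by linarith) (neg_le_abs _)
          exact lt_of_lt_of_eq ((div_lt_iff₀ h).1 habs) (mul_comm _ _)
        · refine Or.inr ⟨j, ?_⟩
          have h := hν2 j
          have habs : c / ν2 j < |q.2 j| :=
            lt_of_lt_of_le (by linarith) (neg_le_abs _)
          exact lt_of_lt_of_eq ((div_lt_iff₀ h).1 habs) (mul_comm _ _)
        · refine Or.inl ⟨i, ?_⟩
          have h := hν1 i
          have habs : c / ν1 i < |q.1 i| := lt_of_lt_of_le hi2 (le_abs_self _)
          exact lt_of_lt_of_eq ((div_lt_iff₀ h).1 habs) (mul_comm _ _)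
        · refine Or.inr ⟨j, ?_⟩
          have h := hν2 j
          have habs : c / ν2 j < |q.2 j| := lt_of_lt_of_le hj2 (le_abs_self _)
          exact lt_of_lt_of_eq ((div_lt_iff₀ h).1 habs) (mul_comm _ _)
      -- conclude F q is large
      have hq1 : c - C ≤ F q := by
        have hlq := hlow q
        have hnn1 : (0:ℝ) ≤ ∑ i, ν1 i * |q.1 i| :=
          Finset.sum_nonneg fun i _ => mul_nonneg (hν1 i).le (abs_nonneg _)
        have hnn2 : (0:ℝ) ≤ ∑ j, ν2 j * |q.2 j| :=
          Finset.sum_nonneg fun j _ => mul_nonneg (hν2 j).le (abs_nonneg _)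
        rcases hbig with ⟨i, hbig⟩ | ⟨j, hbig⟩
        · have h1 : ν1 i * |q.1 i| ≤ ∑ i, ν1 i * |q.1 i| :=
            Finset.single_le_sum (fun i _ => mul_nonneg (hν1 i).le (abs_nonneg _))
              (Finset.mem_univ i)
          linarith
        · have h1 : ν2 j * |q.2 j| ≤ ∑ j, ν2 j * |q.2 j| :=
            Finset.single_le_sum (fun j _ => mul_nonneg (hν2 j).le (abs_nonneg _))
              (Finset.mem_univ j)
          linarith
      have hq2 : F (0, 0) + 1 ≤ F q := by
        have : F (0,0) ≤ |F (0,0)| := le_abs_self _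
        rw [hc] at hq1; linarith
      exact le_trans (hpmin h0K) (by linarith)
  have hEqA : ∀ i0 : Fin I,
      Real.exp (p.1 i0) ^ 2 + ∑ j, Real.exp (p.1 i0) * Real.exp (p.2 j) * P i0 j = ν1 i0 := by
    intro i0
    set x : ℝ := p.1 i0 with hx
    set B : ℝ := ∑ j, P i0 j * Real.exp (p.2 j) with hB
    set D : ℝ := (∑ i ∈ Finset.univ.erase i0, Real.exp (2 * p.1 i) / 2)
      + (∑ j, Real.exp (2 * p.2 j) / 2)
      + (∑ i ∈ Finset.univ.erase i0, ∑ j, P i j * Real.exp (p.1 i + p.2 j))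
      - (∑ i ∈ Finset.univ.erase i0, ν1 i * p.1 i) - (∑ j, ν2 j * p.2 j) with hD
    set φ : ℝ → ℝ := fun t => F (Function.update p.1 i0 t, p.2) with hφ
    have hφeq : φ = fun t => Real.exp (2*t)/2 + Real.exp t * B - ν1 i0 * t + D := by
      funext t
      simp only [hφ, hF]
      rw [cs_sum_update (fun i y => Real.exp (2 * y) / 2) p.1 i0 t,
          cs_sum_update (fun i y => ∑ j, P i j * Real.exp (y + p.2 j)) p.1 i0 t,
          cs_sum_update (fun i y => ν1 i * y) p.1 i0 t]
      have hnice : ∑ j, P i0 j * Real.exp (t + p.2 j) = Real.exp t * B := by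
        rw [hB, Finset.mul_sum]
        refine Finset.sum_congr rfl fun j _ => ?_
        rw [Real.exp_add]; ring
      rw [hnice, hD]
      ring
    have hmin1 : IsLocalMin φ x := by
      have hφx : φ x = F p := by
        simp only [hφ, hx, Function.update_eq_self]
      refine Filter.Eventually.of_forall fun t => ?_
      rw [hφx]; exact hglobal _
    rw [hφeq] at hmin1
    have hzero : Real.exp (2*x) + Real.exp x * B - ν1 i0 = 0 := by
      have h1 : HasDerivAt (fun t => Real.exp (2*t)/2) (Real.exp (2*x)) x := by
        have := (((hasDerivAt_id x).const_mul (2:ℝ)).exp).div_const 2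
        simp only [id_eq, mul_one] at this
        convert this using 1
        all_goals first | ring | rfl
      have h2 : HasDerivAt (fun t : ℝ => Real.exp t * B) (Real.exp x * B) x :=
        (Real.hasDerivAt_exp x).mul_const B
      have h3 : HasDerivAt (fun t : ℝ => ν1 i0 * t) (ν1 i0) x := by
        simpa using (hasDerivAt_id x).const_mul (ν1 i0)
      exact hmin1.hasDerivAt_eq_zero (((h1.add h2).sub h3).add_const D)
    have hexp2 : Real.exp (2*x) = Real.exp x ^ 2 := by
      rw [two_mul, Real.exp_add]; ring
    have hmulB : Real.exp x * B = ∑ j, Real.exp x * Real.exp (p.2 j) * P i0 j := by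
      rw [hB, Finset.mul_sum]
      exact Finset.sum_congr rfl fun j _ => by ring
    rw [hexp2, hmulB] at hzero
    linarith
  have hEqB : ∀ j0 : Fin J,
      Real.exp (p.2 j0) ^ 2 + ∑ i, Real.exp (p.1 i) * Real.exp (p.2 j0) * P i j0 = ν2 j0 := by
    intro j0
    set x : ℝ := p.2 j0 with hx
    set B : ℝ := ∑ i, P i j0 * Real.exp (p.1 i) with hB
    set D : ℝ := (∑ i, Real.exp (2 * p.1 i) / 2)
      + (∑ j ∈ Finset.univ.erase j0, Real.exp (2 * p.2 j) / 2)
      + (∑ j ∈ Finset.univ.erase j0, ∑ i, P i j * Real.exp (p.1 i + p.2 j))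
      - (∑ i, ν1 i * p.1 i) - (∑ j ∈ Finset.univ.erase j0, ν2 j * p.2 j) with hD
    set φ : ℝ → ℝ := fun t => F (p.1, Function.update p.2 j0 t) with hφ
    have hφeq : φ = fun t => Real.exp (2*t)/2 + Real.exp t * B - ν2 j0 * t + D := by
      funext t
      simp only [hφ, hF]
      rw [Finset.sum_comm (f := fun i j => P i j * Real.exp (p.1 i + Function.update p.2 j0 t j))]
      rw [cs_sum_update (fun j y => Real.exp (2 * y) / 2) p.2 j0 t,
          cs_sum_update (fun j y => ∑ i, P i j * Real.exp (p.1 i + y)) p.2 j0 t,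
          cs_sum_update (fun j y => ν2 j * y) p.2 j0 t]
      have hnice : ∑ i, P i j0 * Real.exp (p.1 i + t) = Real.exp t * B := by
        rw [hB, Finset.mul_sum]
        refine Finset.sum_congr rfl fun i _ => ?_
        rw [Real.exp_add]; ring
      rw [hnice, hD]
      ring
    have hmin1 : IsLocalMin φ x := by
      have hφx : φ x = F p := by
        simp only [hφ, hx, Function.update_eq_self]
      refine Filter.Eventually.of_forall fun t => ?_
      rw [hφx]; exact hglobal _
    rw [hφeq] at hmin1
    have hzero : Real.exp (2*x) + Real.exp x * B - ν2 j0 = 0 := by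
      have h1 : HasDerivAt (fun t => Real.exp (2*t)/2) (Real.exp (2*x)) x := by
        have := (((hasDerivAt_id x).const_mul (2:ℝ)).exp).div_const 2
        simp only [id_eq, mul_one] at this
        convert this using 1
        all_goals first | ring | rfl
      have h2 : HasDerivAt (fun t : ℝ => Real.exp t * B) (Real.exp x * B) x :=
        (Real.hasDerivAt_exp x).mul_const B
      have h3 : HasDerivAt (fun t : ℝ => ν2 j0 * t) (ν2 j0) x := by
        simpa using (hasDerivAt_id x).const_mul (ν2 j0)
      exact hmin1.hasDerivAt_eq_zero (((h1.add h2).sub h3).add_const D)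
    have hexp2 : Real.exp (2*x) = Real.exp x ^ 2 := by
      rw [two_mul, Real.exp_add]; ring
    have hmulB : Real.exp x * B = ∑ i, Real.exp (p.1 i) * Real.exp x * P i j0 := by
      rw [hB, Finset.mul_sum]
      exact Finset.sum_congr rfl fun i _ => by ring
    rw [hexp2, hmulB] at hzero
    linarith
  exact ⟨fun i => Real.exp (p.1 i), fun j => Real.exp (p.2 j),
    fun i => Real.exp_pos _, fun j => Real.exp_pos _, hEqA, hEqB⟩

/-- **Choo–Siow inverse problem: existence and uniqueness.**
If all entries of the I×J gains matrix `P` are nonnegative and all entries of the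
population vector `ν ∈ ℝ^{I+J}` are strictly positive, then the Choo–Siow system of
I+J quadratic equations has exactly one solution `β` with all components positive. -/
theorem choo_siow_existence_uniqueness (I J : ℕ) (hI : 0 < I) (hJ : 0 < J)
    (P : Fin I → Fin J → ℝ) (hP : ∀ i j, 0 ≤ P i j)
    (ν : Fin (I + J) → ℝ) (hν : ∀ k, 0 < ν k) :
    ∃! β : Fin (I + J) → ℝ,
      (∀ k, 0 < β k) ∧
      (∀ i : Fin I,
        β (Fin.castAdd J i) ^ 2 +
          ∑ j : Fin J, β (Fin.castAdd J i) * β (Fin.natAdd I j) * P i j =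
        ν (Fin.castAdd J i)) ∧
      (∀ j : Fin J,
        β (Fin.natAdd I j) ^ 2 +
          ∑ i : Fin I, β (Fin.castAdd J i) * β (Fin.natAdd I j) * P i j =
        ν (Fin.natAdd I j)) := by
  obtain ⟨a, b, ha, hb, hEa, hEb⟩ := cs_exists P hP (fun i => ν (Fin.castAdd J i))
    (fun j => ν (Fin.natAdd I j)) (fun i => hν _) (fun j => hν _)
  refine ⟨fun k => Fin.addCases a b k, ⟨?_, ?_, ?_⟩, ?_⟩
  · intro k
    refine Fin.addCases (fun i => ?_) (fun j => ?_) k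
    · simp only [Fin.addCases_left]; exact ha i
    · simp only [Fin.addCases_right]; exact hb j
  · intro i
    simp only [Fin.addCases_left, Fin.addCases_right]
    exact hEa i
  · intro j
    simp only [Fin.addCases_left, Fin.addCases_right]
    exact hEb j
  · rintro γ ⟨hγpos, hγ1, hγ2⟩
    obtain ⟨haa, hbb⟩ := cs_unique P hP (fun i => ν (Fin.castAdd J i))
      (fun j => ν (Fin.natAdd I j))
      (fun i => γ (Fin.castAdd J i)) a (fun j => γ (Fin.natAdd I j)) b
      (fun i => hγpos _) ha (fun j => hγpos _) hb hγ1 hEa hγ2 hEb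
    funext k
    refine Fin.addCases (fun i => ?_) (fun j => ?_) k
    · simp only [Fin.addCases_left]; exact congrFun haa i
    · simp only [Fin.addCases_right]; exact congrFun hbb j
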